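/- Let E' be a subset of the edges of a graph G on vertex set {1,...,n}. The squared-length measurement map in dimension 1 restricted to the coordinates of E' is surjective onto ℂ^{|E'|} (equivalently, the coordinate subspace indexed by E' is independent in the 1-dimensional measurement variety of G) if and only if the edges of E' form a forest. -/

import Mathlib

open SimpleGraph

private lemma walk_const {n : ℕ} {H : SimpleGraph (Fin n)} {v : Sym2 (Fin n) → ℂ}
    {p : Fin n → ℂ} (hp : ∀ i j : Fin n, H.Adj i j → (p i - p j) ^ 2 = v s(i, j)) :
    ∀ {x y : Fin n} (w : H.Walk x y), (∀ e ∈ w.edges, v e = 0) → p x = p y := by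
  intro x y w
  induction w with
  | nil => intro _; rfl
  | cons h w ih =>
    intro hv
    have h1 : (p _ - p _) ^ 2 = v s(_, _) := hp _ _ h
    rw [hv _ (by simp)] at h1
    have := pow_eq_zero_iff (n := 2) (by norm_num) |>.mp h1
    have h2 := sub_eq_zero.mp this
    rw [h2]
    exact ih fun e he => hv e (by simp [he])

private lemma acyclic_mono {n : ℕ} {H H' : SimpleGraph (Fin n)} (hle : H' ≤ H)
    (h : H.IsAcyclic) : H'.IsAcyclic := by
  intro a c hc
  exact h (c.mapLe hle) (hc.mapLe hle)

private lemma key {n : ℕ} : ∀ (m : ℕ) (H : SimpleGraph (Fin n)),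
    H.edgeSet.ncard ≤ m → H.IsAcyclic → ∀ v : Sym2 (Fin n) → ℂ, ∃ p : Fin n → ℂ,
      ∀ i j : Fin n, H.Adj i j → (p i - p j) ^ 2 = v s(i, j) := by
  intro m
  induction m with
  | zero =>
    intro H hcard _ v
    have hH : H.edgeSet = ∅ := by
      rw [← Set.ncard_eq_zero (Set.toFinite _)]; omega
    refine ⟨0, fun i j hij => ?_⟩
    have hm : s(i, j) ∈ H.edgeSet := H.mem_edgeSet.mpr hij
    rw [hH] at hm
    exact (Set.notMem_empty _ hm).elim
  | succ m ih =>
    intro H hcard hac v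
    by_cases hne : H.edgeSet = ∅
    · refine ⟨0, fun i j hij => ?_⟩
      have hm : s(i, j) ∈ H.edgeSet := H.mem_edgeSet.mpr hij
      rw [hne] at hm
      exact (Set.notMem_empty _ hm).elim
    · obtain ⟨e, he⟩ := Set.nonempty_iff_ne_empty.mpr hne
      induction e using Sym2.inductionOn with
      | hf a b =>
      have hab : H.Adj a b := he
      set H' := H.deleteEdges {s(a, b)} with hH'
      have hle' : H' ≤ H := deleteEdges_le _
      have hac' : H'.IsAcyclic := acyclic_mono hle' hac
      have hbridge : H.IsBridge s(a, b) :=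
        (isAcyclic_iff_forall_adj_isBridge.mp hac) hab
      have hreach : ¬ H'.Reachable a b := isBridge_iff.mp hbridge
      have hcard' : H'.edgeSet.ncard ≤ m := by
        have : H'.edgeSet = H.edgeSet \ {s(a, b)} := edgeSet_deleteEdges _
        rw [this, Set.ncard_diff_singleton_of_mem he]
        have hpos : 0 < H.edgeSet.ncard :=
          Set.ncard_pos (Set.toFinite _) |>.mpr ⟨_, he⟩
        omega
      obtain ⟨p', hp'⟩ := ih H' hcard' hac' v
      obtain ⟨d, hd⟩ := Complex.isAlgClosed.exists_pow_nat_eq (v s(a, b)) zero_lt_two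
      classical
      set c0 : ℂ := p' a - p' b - d with hc0
      refine ⟨fun i => if H'.Reachable i b then p' i + c0 else p' i, fun i j hij => ?_⟩
      by_cases hij' : s(i, j) = s(a, b)
      · rcases Sym2.eq_iff.mp hij' with ⟨rfl, rfl⟩ | ⟨rfl, rfl⟩
        · have h1 : ¬ H'.Reachable i j := hreach
          have h2 : H'.Reachable j j := Reachable.refl _
          simp only [if_pos h2, if_neg h1, hc0]
          rw [show p' i - (p' j + (p' i - p' j - d)) = d by ring, hd]
        · have h1 : ¬ H'.Reachable j i := hreach
          have h2 : H'.Reachable i i := Reachable.refl _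
          simp only [if_pos h2, if_neg h1, hc0]
          rw [show p' i + (p' j - p' i - d) - p' j = -d by ring]
          rw [show (-d) ^ 2 = d ^ 2 by ring, hd, Sym2.eq_swap]
      · have hadj' : H'.Adj i j := by
          rw [hH', deleteEdges_adj]
          exact ⟨hij, by simpa using hij'⟩
        have hiff : H'.Reachable i b ↔ H'.Reachable j b :=
          ⟨fun h => (hadj'.symm.reachable).trans h, fun h => (hadj'.reachable).trans h⟩
        have := hp' i j hadj'
        by_cases hr : H'.Reachable i b
        · simp only [if_pos hr, if_pos (hiff.mp hr)]
          convert this using 2; ring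
        · simp only [if_neg hr, if_neg (fun h => hr (hiff.mpr h))]
          exact this

/-- The 1-dimensional squared-length measurement map restricted to the edges of a
subgraph `H ≤ G` is surjective onto all target values iff the edges of `H` form a forest. -/
theorem stmt0 (n : ℕ) (G H : SimpleGraph (Fin n)) (hle : H ≤ G) :
    (∀ v : Sym2 (Fin n) → ℂ, ∃ p : Fin n → ℂ,
      ∀ i j : Fin n, H.Adj i j → (p i - p j) ^ 2 = v s(i, j)) ↔ H.IsAcyclic := by
  constructor
  · intro hsurj
    by_contra hcyc
    rw [SimpleGraph.IsAcyclic] at hcyc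
    push_neg at hcyc
    obtain ⟨a, c, hc⟩ := hcyc
    cases c with
    | nil => exact hc.ne_nil rfl
    | @cons _ b _ h q =>
      classical
      obtain ⟨p, hp⟩ := hsurj (fun e => if e = s(a, b) then 1 else 0)
      have hnodup : s(a, b) ∉ q.edges := by
        have := hc.edges_nodup
        simp only [SimpleGraph.Walk.edges_cons, List.nodup_cons] at this
        exact this.1
      have hconst : p b = p a := by
        refine walk_const (v := fun e => if e = s(a, b) then 1 else 0) hp q fun e hev => ?_
        have : e ≠ s(a, b) := fun h' => hnodup (h' ▸ hev)
        simp [this]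
      have h1 : (p a - p b) ^ 2 = 1 := by
        have := hp a b h
        simpa using this
      rw [hconst] at h1
      simp at h1
  · intro hac v
    exact key (H.edgeSet.ncard) H le_rfl hac v
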